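/- Let S ∈ Sp(2n,ℝ) have block form S = ((A,B),(C,D)) with real n×n blocks, and let M = X + iY where X and Y are real symmetric n×n matrices with X positive definite. Then the complex n×n matrix CM + iD = C(X + iY) + iD is invertible. -/

import Mathlib

open Matrix

noncomputable section

/-- The standard symplectic matrix `J = ((0, I), (-I, 0))`. -/
def stdJ (n : ℕ) : Matrix (Fin n ⊕ Fin n) (Fin n ⊕ Fin n) ℝ :=
  Matrix.fromBlocks 0 1 (-1) 0

/-- A real `2n × 2n` matrix is symplectic if `Sᵀ J S = J`. -/
def IsSymplectic {n : ℕ} (S : Matrix (Fin n ⊕ Fin n) (Fin n ⊕ Fin n) ℝ) : Prop :=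
  Sᵀ * stdJ n * S = stdJ n

lemma real_dot_map {n : ℕ} (a b : Fin n → ℝ) (X : Matrix (Fin n) (Fin n) ℝ) :
    (fun j => ((a j : ℂ))) ⬝ᵥ (X.map Complex.ofReal) *ᵥ (fun j => ((b j : ℂ)))
      = ((a ⬝ᵥ X *ᵥ b : ℝ) : ℂ) := by
  simp only [dotProduct, mulVec, Matrix.map_apply]
  push_cast
  ring

lemma isHermitian_map {n : ℕ} (X : Matrix (Fin n) (Fin n) ℝ) (h : X.IsSymm) :
    (X.map Complex.ofReal).IsHermitian := by
  ext i j
  simp [Matrix.map_apply, Matrix.conjTranspose_apply, ← h.apply i j]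

/-- For a symplectic matrix `S = ((A,B),(C,D))` and `M = X + iY` with `X, Y` real
symmetric and `X` positive definite, the complex matrix `CM + iD` is invertible. -/
theorem CM_plus_iD_invertible {n : ℕ} (hn : 1 ≤ n)
    (S : Matrix (Fin n ⊕ Fin n) (Fin n ⊕ Fin n) ℝ) (hS : IsSymplectic S)
    (A B C D : Matrix (Fin n) (Fin n) ℝ) (hblocks : S = Matrix.fromBlocks A B C D)
    (X Y : Matrix (Fin n) (Fin n) ℝ) (hXsymm : X.IsSymm) (hYsymm : Y.IsSymm)
    (hX : X.PosDef) :
    IsUnit (C.map Complex.ofReal *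
        (X.map Complex.ofReal + Complex.I • Y.map Complex.ofReal) +
      Complex.I • D.map Complex.ofReal) := by
  classical
  set A' := A.map Complex.ofReal with hA'
  set B' := B.map Complex.ofReal with hB'
  set C' := C.map Complex.ofReal with hC'
  set D' := D.map Complex.ofReal with hD'
  set X' := X.map Complex.ofReal with hX'
  set Y' := Y.map Complex.ofReal with hY'
  set M' : Matrix (Fin n) (Fin n) ℂ := X' + Complex.I • Y' with hM'
  set N : Matrix (Fin n) (Fin n) ℂ := C' * M' + Complex.I • D' with hNdef
  by_contra hunit
  have hdet : N.det = 0 := by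
    by_contra hd
    exact hunit ((Matrix.isUnit_iff_isUnit_det N).2 (isUnit_iff_ne_zero.2 hd))
  obtain ⟨v, hv, hNv⟩ := Matrix.exists_mulVec_eq_zero_iff.2 hdet
  -- complexified symplectic identity
  set Sc := S.map Complex.ofReal with hScdef
  set Jc := (stdJ n).map Complex.ofReal with hJcdef
  have hSc : Scᵀ * Jc * Sc = Jc := by
    have h0 := congrArg (Complex.ofRealHom.mapMatrix) hS
    simp [IsSymplectic, RingHom.mapMatrix_apply, Matrix.map_mul, Matrix.transpose_map,
      hScdef, hJcdef] at h0
    exact h0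
  have hScblocks : Sc = Matrix.fromBlocks A' B' C' D' := by
    rw [hScdef, hblocks, Matrix.fromBlocks_map]
  have hJc : Jc = Matrix.fromBlocks 0 1 (-1) 0 := by
    rw [hJcdef, stdJ, Matrix.fromBlocks_map]
    ext i j
    cases i <;> cases j <;>
      simp [Matrix.map_apply, Matrix.fromBlocks, Matrix.neg_apply, Matrix.one_apply,
        apply_ite Complex.ofReal]
  -- the vectors
  set w : Fin n → ℂ := M' *ᵥ v with hw
  set ξ : Fin n ⊕ Fin n → ℂ := Sum.elim w (Complex.I • v) with hξ
  have h2 : C' *ᵥ w + D' *ᵥ (Complex.I • v) = 0 := by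
    have : N *ᵥ v = C' *ᵥ w + D' *ᵥ (Complex.I • v) := by
      rw [hNdef, Matrix.add_mulVec, Matrix.smul_mulVec, ← Matrix.mulVec_mulVec,
        Matrix.mulVec_smul, hw]
    rw [← this, hNv]
  set u : Fin n → ℂ := A' *ᵥ w + B' *ᵥ (Complex.I • v) with hu
  have hScξ : Sc *ᵥ ξ = Sum.elim u 0 := by
    rw [hScblocks, hξ, Matrix.fromBlocks_mulVec]
    simp only [Sum.elim_comp_inl, Sum.elim_comp_inr]
    rw [h2]
  -- star Sc = Scᵀ (real entries)
  have hScH : Scᴴ = Scᵀ := by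
    ext i j
    simp [hScdef, Matrix.conjTranspose_apply, Matrix.map_apply]
  -- key invariance
  have key : star ξ ⬝ᵥ Jc *ᵥ ξ = star (Sc *ᵥ ξ) ⬝ᵥ Jc *ᵥ (Sc *ᵥ ξ) := by
    rw [Matrix.star_mulVec, hScH, Matrix.mulVec_mulVec, Matrix.dotProduct_mulVec,
      Matrix.dotProduct_mulVec, Matrix.vecMul_vecMul, ← Matrix.mul_assoc, hSc,
      ← Matrix.dotProduct_mulVec]
  -- RHS = 0
  have hrhs : star (Sc *ᵥ ξ) ⬝ᵥ Jc *ᵥ (Sc *ᵥ ξ) = 0 := by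
    rw [hScξ, hJc]
    have hstar : star (Sum.elim u (0 : Fin n → ℂ)) = Sum.elim (star u) 0 := by
      funext i; cases i <;> simp [Pi.star_apply]
    rw [Matrix.fromBlocks_mulVec, hstar]
    simp [sumElim_dotProduct_sumElim]
  -- LHS computation
  have hJξ : Jc *ᵥ ξ = Sum.elim (Complex.I • v) (-w) := by
    rw [hJc, hξ, Matrix.fromBlocks_mulVec]
    simp [Matrix.neg_mulVec]
  have hstarξ : star ξ = Sum.elim (star w) ((-Complex.I) • star v) := by
    funext i; cases i <;> simp [hξ, Pi.star_apply, Complex.conj_I, mul_comm]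
  -- Hermitian facts
  have hXh : X'.IsHermitian := isHermitian_map X hXsymm
  have hYh : Y'.IsHermitian := isHermitian_map Y hYsymm
  have hstarw : star w = star v ᵥ* (X' - Complex.I • Y') := by
    rw [hw, Matrix.star_mulVec, hM']
    congr 1
    rw [Matrix.conjTranspose_add, hXh]
    congr 1
    rw [Matrix.conjTranspose_smul, hYh]
    simp [Complex.conj_I, sub_eq_add_neg, neg_smul]
  set α : ℂ := star v ⬝ᵥ X' *ᵥ v with hα
  set β : ℂ := star v ⬝ᵥ Y' *ᵥ v with hβ
  have hvw : star v ⬝ᵥ w = α + Complex.I * β := by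
    rw [hw, hM', Matrix.add_mulVec, Matrix.smul_mulVec, dotProduct_add,
      dotProduct_smul, hα, hβ]
    simp [smul_eq_mul]
  have hwv : star w ⬝ᵥ v = α - Complex.I * β := by
    rw [hstarw, ← Matrix.dotProduct_mulVec, Matrix.sub_mulVec, Matrix.smul_mulVec,
      dotProduct_sub, dotProduct_smul, hα, hβ]
    simp [smul_eq_mul]
  have hlhs : star ξ ⬝ᵥ Jc *ᵥ ξ = 2 * Complex.I * α := by
    rw [hJξ, hstarξ, sumElim_dotProduct_sumElim, dotProduct_smul,
      smul_dotProduct, dotProduct_neg, hvw, hwv]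
    simp [smul_eq_mul]
    ring
  have hα0 : α = 0 := by
    have h0 := key.trans hrhs
    rw [hlhs] at h0
    have h2I : (2 * Complex.I : ℂ) ≠ 0 := by simp [Complex.I_ne_zero]
    exact (mul_eq_zero.mp h0).resolve_left h2I
  -- contradiction with positive definiteness
  set vr : Fin n → ℝ := fun j => (v j).re with hvr
  set vi : Fin n → ℝ := fun j => (v j).im with hvi
  have hvdecomp : v = (fun j => ((vr j : ℂ))) + Complex.I • (fun j => ((vi j : ℂ))) := by
    funext j
    simp [hvr, hvi, Complex.ext_iff]
  have hstv : star v = (fun j => ((vr j : ℂ))) - Complex.I • (fun j => ((vi j : ℂ))) := by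
    funext j
    simp [hvr, hvi, Complex.ext_iff]
  have hαre : α = ((vr ⬝ᵥ X *ᵥ vr + vi ⬝ᵥ X *ᵥ vi : ℝ) : ℂ)
      + Complex.I * ((vr ⬝ᵥ X *ᵥ vi - vi ⬝ᵥ X *ᵥ vr : ℝ) : ℂ) := by
    rw [hα]
    conv_lhs => rw [hstv, hvdecomp]
    rw [Matrix.mulVec_add, Matrix.mulVec_smul, sub_dotProduct, smul_dotProduct,
      dotProduct_add, dotProduct_add, dotProduct_smul, dotProduct_smul]
    rw [real_dot_map, real_dot_map, real_dot_map, real_dot_map]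
    simp only [smul_eq_mul, Pi.smul_apply]
    push_cast
    linear_combination (-(↑(vi ⬝ᵥ X *ᵥ vi) : ℂ)) * Complex.I_sq
  have hre0 : vr ⬝ᵥ X *ᵥ vr + vi ⬝ᵥ X *ᵥ vi = 0 := by
    have := congrArg Complex.re hαre
    rw [hα0] at this
    simpa using this.symm
  have hvne : vr ≠ 0 ∨ vi ≠ 0 := by
    by_contra h
    push_neg at h
    apply hv
    funext j
    have h1 : vr j = 0 := by rw [h.1]; rfl
    have h2 : vi j = 0 := by rw [h.2]; rfl
    simp [hvr, hvi] at h1 h2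
    exact Complex.ext h1 h2
  have hnn : ∀ x : Fin n → ℝ, 0 ≤ x ⬝ᵥ X *ᵥ x := by
    intro x
    have := hX.posSemidef.dotProduct_mulVec_nonneg x
    simpa using this
  have hpos : ∀ x : Fin n → ℝ, x ≠ 0 → 0 < x ⬝ᵥ X *ᵥ x := by
    intro x hx
    have := hX.dotProduct_mulVec_pos hx
    simpa using this
  rcases hvne with h | h
  · have := add_pos_of_pos_of_nonneg (hpos vr h) (hnn vi)
    rw [hre0] at this; exact lt_irrefl _ this
  · have := add_pos_of_nonneg_of_pos (hnn vr) (hpos vi h)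
    rw [hre0] at this; exact lt_irrefl _ this
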